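/- Let α > 0 and r ≥ 1, and consider the scalar recursion x^{k+1} = x^k + (α/r)·sign(z - x^k) for a constant target z ∈ ℝ, where sign(0) = 0. Then for all k ≥ ⌈|z - x^0|·r/α⌉, we have |x^k - z| ≤ α/r. -/

import Mathlib

/-- The sign-tracking recursion `x^{k+1} = x^k + (α/r)·sign(z - x^k)` reaches
and stays in an `α/r`-neighborhood of `z` after `⌈|z - x⁰|·r/α⌉` steps. -/
theorem stmt_12 (α r z : ℝ) (hα : 0 < α) (hr : 1 ≤ r) (x : ℕ → ℝ)
    (hx : ∀ k, x (k + 1) = x k + (α / r) * Real.sign (z - x k)) :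
    ∀ k, ⌈|z - x 0| * r / α⌉₊ ≤ k → |x k - z| ≤ α / r := by
  have hr0 : (0:ℝ) < r := lt_of_lt_of_le one_pos hr
  set c := α / r with hcdef
  have hc : 0 < c := div_pos hα hr0
  have step : ∀ k, |z - x (k+1)| ≤ max c (|z - x k| - c) := by
    intro k
    rw [hx k]
    rcases lt_trichotomy (z - x k) 0 with h | h | h
    · rw [Real.sign_of_neg h]
      have he : z - (x k + c * (-1)) = (z - x k) + c := by ring
      rw [he]
      rcases le_or_gt (z - x k + c) 0 with h2 | h2
      · rw [abs_of_nonpos h2, abs_of_neg h]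
        refine le_max_of_le_right (le_of_eq ?_); ring
      · rw [abs_of_pos h2]
        exact le_max_of_le_left (by linarith)
    · simp [h, Real.sign_zero, hc.le]
    · rw [Real.sign_of_pos h]
      have he : z - (x k + c * 1) = (z - x k) - c := by ring
      rw [he]
      rcases le_or_gt (z - x k - c) 0 with h2 | h2
      · rw [abs_of_nonpos h2]
        exact le_max_of_le_left (by linarith)
      · rw [abs_of_pos h2, abs_of_pos h]
        exact le_max_of_le_right le_rfl
  have inv : ∀ k, |z - x k| ≤ max c (|z - x 0| - k * c) := by
    intro k
    induction k with
    | zero => simp [le_max_iff]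
    | succ n ih =>
      refine le_trans (step n) ?_
      have : |z - x n| - c ≤ max c (|z - x 0| - ((n:ℝ)+1) * c) := by
        rcases le_or_gt (|z - x 0| - n * c) c with h | h
        · have := le_trans ih (max_le le_rfl h)
          exact le_max_of_le_left (by linarith)
        · have := le_trans ih (max_le h.le le_rfl)
          refine le_max_of_le_right ?_
          push_cast; linarith
        
      refine max_le (le_max_left _ _) (this.trans (le_of_eq ?_))
      push_cast; ring_nf
  intro k hk
  have hN : |z - x 0| * r / α ≤ (⌈|z - x 0| * r / α⌉₊ : ℝ) := Nat.le_ceil _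
  have hkk : (⌈|z - x 0| * r / α⌉₊ : ℝ) ≤ (k : ℝ) := by exact_mod_cast hk
  have h0 : |z - x 0| ≤ k * c := by
    have : |z - x 0| * r / α ≤ (k:ℝ) := hN.trans hkk
    have := mul_le_mul_of_nonneg_right this hc.le
    calc |z - x 0| = (|z - x 0| * r / α) * c := by
          rw [hcdef]; field_simp [hr0.ne', hα.ne']
      _ ≤ k * c := this
  have := le_trans (inv k) (max_le le_rfl (by linarith))
  rwa [abs_sub_comm]
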